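/- Let K be a field, V a finite-dimensional K-vector space of dimension r, realized as an r-dimensional linear subspace of K^N. Then there exists a vector v ∈ V having at least r coordinates equal to 1. -/

import Mathlib

open Classical in
/-- Any `r`-dimensional linear subspace of `K^N` contains a vector with at least `r`
coordinates equal to `1`. -/
theorem stmt_4 (K : Type*) [Field K] (N r : ℕ) (V : Submodule K (Fin N → K))
    (hV : Module.finrank K V = r) :
    ∃ v ∈ V, r ≤ (Finset.univ.filter (fun i : Fin N => v i = 1)).card := by
  classical
  set f : (Fin N → K) → ℕ :=
    fun v => (Finset.univ.filter (fun i : Fin N => v i = 1)).card with hf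
  have hfle : ∀ v, f v ≤ N := fun v => by
    simpa using (Finset.card_filter_le Finset.univ (fun i : Fin N => v i = 1))
  set T : Finset ℕ := (Finset.range (N+1)).filter (fun n => ∃ v ∈ V, f v = n) with hT
  have hT0 : (0:ℕ) ∈ T := by
    simp only [hT, Finset.mem_filter, Finset.mem_range]
    exact ⟨Nat.succ_pos N, 0, V.zero_mem, by simp [hf]⟩
  have hTne : T.Nonempty := ⟨0, hT0⟩
  set m := T.max' hTne with hm
  obtain ⟨-, v, hvV, hvm⟩ := Finset.mem_filter.mp (T.max'_mem hTne)
  refine ⟨v, hvV, ?_⟩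
  show r ≤ f v
  rw [hvm]
  by_contra hlt
  push_neg at hlt
  set J : Finset (Fin N) := Finset.univ.filter (fun i => v i = 1) with hJ
  have hJcard : J.card = m := hvm
  let g : V →ₗ[K] ({x : Fin N // x ∈ J} → K) :=
    { toFun := fun x => fun i => (x : Fin N → K) i.1
      map_add' := by intros; rfl
      map_smul' := by intros; rfl }
  have hker : 0 < Module.finrank K (LinearMap.ker g) := by
    have h1 := LinearMap.finrank_range_add_finrank_ker g
    have h2 : Module.finrank K (LinearMap.range g) ≤ m := by
      have hle := Submodule.finrank_le (LinearMap.range g)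
      have hdim : Module.finrank K ({x : Fin N // x ∈ J} → K) = m := by
        simp [Module.finrank_pi, hJcard]
      omega
    rw [hV] at h1
    omega
  have : Nontrivial (LinearMap.ker g) := Module.finrank_pos_iff.mp hker
  obtain ⟨w, hw0⟩ := exists_ne (0 : LinearMap.ker g)
  have hwV : ((w : V) : Fin N → K) ∈ V := (w : V).2
  have hwJ : ∀ i ∈ J, ((w : V) : Fin N → K) i = 0 := by
    intro i hi
    have := w.2
    rw [LinearMap.mem_ker] at this
    have := congrFun this ⟨i, hi⟩
    exact this
  have hwne : ((w : V) : Fin N → K) ≠ 0 := by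
    intro h
    apply hw0
    ext
    simpa using congrFun h _
  obtain ⟨j, hj⟩ : ∃ j, ((w : V) : Fin N → K) j ≠ 0 := by
    by_contra hc
    push_neg at hc
    exact hwne (funext hc)
  have hjJ : j ∉ J := fun h => hj (hwJ j h)
  set c : K := (1 - v j) * (((w : V) : Fin N → K) j)⁻¹ with hc
  set u : Fin N → K := v + c • ((w : V) : Fin N → K) with hu
  have huV : u ∈ V := V.add_mem hvV (V.smul_mem c hwV)
  have hsub : insert j J ⊆ Finset.univ.filter (fun i : Fin N => u i = 1) := by
    intro i hi
    rw [Finset.mem_insert] at hi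
    simp only [Finset.mem_filter, Finset.mem_univ, true_and]
    rcases hi with rfl | hiJ
    · simp only [hu, Pi.add_apply, Pi.smul_apply, smul_eq_mul, hc]
      field_simp
      ring
    · have h1 : v i = 1 := by
        have := hiJ; rw [hJ, Finset.mem_filter] at this; exact this.2
      simp [hu, h1, hwJ i hiJ]
  have hcard : m + 1 ≤ f u := by
    have := Finset.card_le_card hsub
    rwa [Finset.card_insert_of_notMem hjJ, hJcard] at this
  have hfuT : f u ∈ T := by
    rw [hT, Finset.mem_filter, Finset.mem_range]
    exact ⟨Nat.lt_succ_of_le (hfle u), u, huV, rfl⟩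
  have := T.le_max' _ hfuT
  omega
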